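/- The Gabidulin generator matrix G with entries G_{i,j} = g_j^{q^i} (0 ≤ i ≤ k−1, 0 ≤ j ≤ n−1), where g_0,…,g_{n−1} ∈ F_{q^m} are linearly independent over F_q and k ≤ n ≤ m, has full row rank k over F_{q^m}. -/

import Mathlib

/-- The Gabidulin generator matrix `G` with entries `G i j = g j ^ (q ^ i)`,
where `g 0, …, g (n-1) ∈ F_{q^m}` are linearly independent over `F_q` and
`k ≤ n ≤ m`, has full row rank `k`. -/
theorem gabidulin_generator_full_rank {K L : Type*} [Field K] [Field L]
    [Fintype K] [Fintype L] [Algebra K L] {n m k : ℕ}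
    (hm : Module.finrank K L = m) (hn : n ≤ m) (hk : k ≤ n)
    (g : Fin n → L) (hg : LinearIndependent K g) :
    (Matrix.of fun (i : Fin k) (j : Fin n) =>
      g j ^ Fintype.card K ^ (i : ℕ)).rank = k := by
  classical
  set q := Fintype.card K with hqdef
  have hq : 1 < q := Fintype.one_lt_card
  obtain ⟨p, hp⟩ := CharP.exists K
  haveI : Fact p.Prime := ⟨(CharP.char_is_prime K p)⟩
  haveI : CharP L p := charP_of_injective_algebraMap (algebraMap K L).injective p
  obtain ⟨r, hr⟩ : ∃ r : ℕ, q = p ^ r := by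
    obtain ⟨r, hr⟩ := FiniteField.card K p
    exact ⟨r, hr.2⟩
  -- rows are linearly independent over L
  have hrows : LinearIndependent L
      (Matrix.of fun (i : Fin k) (j : Fin n) => g j ^ q ^ (i : ℕ)).row := by
    rw [Fintype.linearIndependent_iff]
    intro c hc
    by_contra hne
    push_neg at hne
    obtain ⟨i0, hi0⟩ := hne
    -- the K-linear q-polynomial map
    set φ : L → L := fun x => ∑ i : Fin k, c i * x ^ q ^ (i : ℕ) with hφ
    have hpow_add : ∀ (x y : L) (i : ℕ), (x + y) ^ q ^ i = x ^ q ^ i + y ^ q ^ i := by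
      intro x y i
      rw [hr, ← pow_mul, add_pow_char_pow]
    have hφadd : ∀ x y, φ (x + y) = φ x + φ y := by
      intro x y
      simp only [hφ, hpow_add, mul_add]
      rw [Finset.sum_add_distrib]
    have hφsmul : ∀ (a : K) (x : L), φ (a • x) = a • φ x := by
      intro a x
      simp only [hφ, Algebra.smul_def, mul_pow, Finset.mul_sum]
      refine Finset.sum_congr rfl fun i _ => ?_
      rw [← map_pow, FiniteField.pow_card_pow]
      ring
    -- every element of the span of g is a root of φ
    have hspan : ∀ x ∈ Submodule.span K (Set.range g), φ x = 0 := by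
      intro x hx
      induction hx using Submodule.span_induction with
      | mem y hy =>
        obtain ⟨j, rfl⟩ := hy
        have := congrFun hc j
        simpa [hφ] using this
      | zero =>
        simp [hφ, zero_pow (pow_ne_zero _ (by omega : q ≠ 0))]
      | add y z _ _ hy hz => rw [hφadd, hy, hz, add_zero]
      | smul a y _ hy => rw [hφsmul, hy, smul_zero]
    -- the polynomial
    set P : Polynomial L := ∑ i : Fin k, Polynomial.C (c i) * Polynomial.X ^ q ^ (i : ℕ)
      with hP
    have hpowinj : Function.Injective (fun i : ℕ => q ^ i) :=
      Nat.pow_right_injective hq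
    have hcoeff : ∀ i : Fin k, P.coeff (q ^ (i : ℕ)) = c i := by
      intro i
      rw [hP, Polynomial.finset_sum_coeff]
      rw [Finset.sum_eq_single i]
      · simp
      · intro j _ hji
        simp only [Polynomial.coeff_C_mul, Polynomial.coeff_X_pow]
        rw [if_neg, mul_zero]
        intro h
        exact hji (Fin.ext (hpowinj h.symm))
      · simp
    have hPne : P ≠ 0 := fun h => hi0 (by rw [← hcoeff i0, h, Polynomial.coeff_zero])
    have hPdeg : P.natDegree ≤ q ^ (k - 1) := by
      refine (Polynomial.natDegree_sum_le _ _).trans ?_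
      rw [Finset.fold_max_le]
      constructor
      · exact Nat.zero_le _
      intro i _
      refine (Polynomial.natDegree_C_mul_le _ _).trans ?_
      refine (Polynomial.natDegree_X_pow_le _).trans ?_
      exact Nat.pow_le_pow_right (by omega) (by omega)
    -- eval of P is φ
    have hPeval : ∀ x : L, P.eval x = φ x := by
      intro x
      simp [hP, hφ, Polynomial.eval_finset_sum]
    -- all elements of span are roots
    set S := Submodule.span K (Set.range g) with hS
    have hroots : ∀ x : L, x ∈ S → x ∈ P.roots := by
      intro x hx
      rw [Polynomial.mem_roots hPne]
      exact (hPeval x).trans (hspan x hx)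
    -- cardinality comparison
    have hcardS : Fintype.card S = q ^ n := by
      rw [Module.card_eq_pow_finrank (K := K) (V := S)]
      congr 1
      rw [hS, finrank_span_eq_card hg, Fintype.card_fin]
    have hsub : (Set.toFinset (S : Set L)) ⊆ P.roots.toFinset := by
      intro x hx
      rw [Set.mem_toFinset] at hx
      rw [Multiset.mem_toFinset]
      exact hroots x hx
    have hcard1 : Fintype.card S ≤ P.natDegree := by
      calc Fintype.card S = (Set.toFinset (S : Set L)).card := by
            rw [Set.toFinset_card]; rfl
        _ ≤ P.roots.toFinset.card := Finset.card_le_card hsub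
        _ ≤ Multiset.card P.roots := Multiset.toFinset_card_le _
        _ ≤ P.natDegree := Polynomial.card_roots' P
    have : q ^ n ≤ q ^ (k - 1) := by
      rw [← hcardS]; exact hcard1.trans hPdeg
    have hnk : n ≤ k - 1 := (Nat.pow_le_pow_iff_right hq).mp this
    have hk0 : 0 < k := i0.pos
    omega
  have := hrows.rank_matrix
  rwa [Fintype.card_fin] at this
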